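/- Let C be a uniform clutter satisfying the max-flow min-cut property, with incidence matrix A of rank r. Then the greatest common divisor Δ_r(A) of all nonzero r×r minors of A is equal to 1; equivalently, A diagonalizes over ℤ (via row and column operations) to an identity matrix. -/

import Mathlib

open Finset

/-- A clutter on vertex set `Fin n`: a family of nonempty edges, none contained in another. -/
structure Clutter (n : ℕ) where
  edges : Finset (Finset (Fin n))
  nonempty_edges : ∀ e ∈ edges, e.Nonempty
  antichain : ∀ e ∈ edges, ∀ f ∈ edges, e ⊆ f → e = f

namespace Clutter

variable {n : ℕ}

/-- `C` is `d`-uniform: every edge has exactly `d` vertices. -/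
def Uniform (C : Clutter n) (d : ℕ) : Prop := ∀ e ∈ C.edges, e.card = d

/-- `S` is a vertex cover of `C`. -/
def IsCover (C : Clutter n) (S : Finset (Fin n)) : Prop := ∀ e ∈ C.edges, (e ∩ S).Nonempty

/-- `S` is a minimal vertex cover of `C`. -/
def IsMinCover (C : Clutter n) (S : Finset (Fin n)) : Prop :=
  C.IsCover S ∧ ∀ T ⊆ S, C.IsCover T → T = S

/-- The vertex covering number `α₀(C)`. -/
noncomputable def coverNumber (C : Clutter n) : ℕ :=
  sInf {k | ∃ S : Finset (Fin n), C.IsCover S ∧ S.card = k}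

/-- The edge independence (matching) number `β₁(C)`. -/
noncomputable def matchNumber (C : Clutter n) : ℕ :=
  sSup {k | ∃ M : Finset (Finset (Fin n)), M ⊆ C.edges ∧
    (∀ e ∈ M, ∀ f ∈ M, e ≠ f → Disjoint e f) ∧ M.card = k}

/-- `C` has a perfect matching: pairwise disjoint edges covering all vertices. -/
def HasPerfectMatching (C : Clutter n) : Prop :=
  ∃ M : Finset (Finset (Fin n)), M ⊆ C.edges ∧
    (∀ e ∈ M, ∀ f ∈ M, e ≠ f → Disjoint e f) ∧ (∀ i : Fin n, ∃ e ∈ M, i ∈ e)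

/-- The set covering polyhedron `Q(A) = {x : x ≥ 0, xA ≥ 1}`. -/
def QA (C : Clutter n) : Set (Fin n → ℝ) :=
  {x | (∀ i, 0 ≤ x i) ∧ ∀ e ∈ C.edges, 1 ≤ ∑ i ∈ e, x i}

/-- `Q(A)` is an integral polyhedron: all its vertices (extreme points) are integral. -/
def QAIntegral (C : Clutter n) : Prop :=
  ∀ x ∈ Set.extremePoints ℝ C.QA, ∀ i, ∃ z : ℤ, x i = (z : ℝ)

/-- Deletion of a vertex: remove `v` and all edges through it. -/
def delete (C : Clutter n) (v : Fin n) : Clutter n where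
  edges := C.edges.filter (fun e => v ∉ e)
  nonempty_edges := fun e he => C.nonempty_edges e (mem_filter.mp he).1
  antichain := fun e he f hf hef =>
    C.antichain e (mem_filter.mp he).1 f (mem_filter.mp hf).1 hef

/-- The edges of the minor of `C` obtained by deleting the vertices in `D`
(setting them to `0`) and contracting the vertices in `U` (setting them to `1`):
the minimal nonempty sets of the form `e \ U` with `e` an edge disjoint from `D`. -/
def minorEdges (C : Clutter n) (D U : Finset (Fin n)) : Finset (Finset (Fin n)) :=
  ((C.edges.filter (fun e => Disjoint e D)).image (fun e => e \ U)).filter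
    (fun e => e.Nonempty ∧
      ∀ f ∈ (C.edges.filter (fun e => Disjoint e D)).image (fun e => e \ U),
        f.Nonempty → f ⊆ e → f = e)

/-- The minor of `C` determined by deleting `D` and contracting `U`. -/
def minor (C : Clutter n) (D U : Finset (Fin n)) : Clutter n where
  edges := C.minorEdges D U
  nonempty_edges := fun e he => ((mem_filter.mp he).2).1
  antichain := fun e he f hf hef =>
    ((mem_filter.mp hf).2).2 e (mem_filter.mp he).1 ((mem_filter.mp he).2).1 hef

/-- The König property: `α₀(C) = β₁(C)`. -/
def HasKonig (C : Clutter n) : Prop := C.coverNumber = C.matchNumber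

/-- The packing property: every (proper) minor of `C` has the König property. -/
def PackingProperty (C : Clutter n) : Prop :=
  ∀ D U : Finset (Fin n), Disjoint D U →
    (∀ e ∈ C.edges, Disjoint e D → ¬ e ⊆ U) → (C.minor D U).HasKonig

/-- The max-flow min-cut property: for every nonnegative integral `α` the LP
`min{⟨α,x⟩ : x ≥ 0, xA ≥ 1}` and its dual `max{⟨y,1⟩ : y ≥ 0, Ay ≤ α}` both have
integral optimum solutions (expressed via a pair of integral feasible solutions
with equal objective values, which are then optimal by LP duality). -/
def HasMFMC (C : Clutter n) : Prop :=
  ∀ α : Fin n → ℕ,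
    ∃ (x : Fin n → ℕ) (y : Finset (Fin n) → ℕ),
      (∀ e ∈ C.edges, 1 ≤ ∑ i ∈ e, x i) ∧
      (∀ e, e ∉ C.edges → y e = 0) ∧
      (∀ i : Fin n, ∑ e ∈ C.edges.filter (fun e => i ∈ e), y e ≤ α i) ∧
      (∑ i, α i * x i = ∑ e ∈ C.edges, y e)

/-- The incidence matrix of `C`, with columns indexed by the edges. -/
def inc (C : Clutter n) : Matrix (Fin n) {e // e ∈ C.edges} ℤ :=
  Matrix.of fun i e => if i ∈ e.1 then 1 else 0

end Clutter

/-- `Δ_r(A) = 1`: the gcd of all nonzero `r × r` subdeterminants of `A` is `1`,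
i.e. every common divisor of them is a unit. -/
def DeltaOne {m m' : Type*} [Fintype m] [Fintype m'] (A : Matrix m m' ℤ) (r : ℕ) : Prop :=
  ∀ k : ℤ, (∀ (f : Fin r → m) (g : Fin r → m'), Function.Injective f → Function.Injective g →
    (A.submatrix f g).det ≠ 0 → k ∣ (A.submatrix f g).det) → IsUnit k



section Stmt6Aux

open Finset

variable {n d : ℕ}

/-- Half of Cauchy–Binet: divisibility of `det (G * B)` from divisibility of
row-selected maximal minors of `B`. -/
lemma aux_det_mul_dvd_of_dvd_minors {R : Type*} [CommRing R] {I : Type*} [Fintype I]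
    [DecidableEq I] {m : ℕ} (k : R) (G : Matrix (Fin m) I R) (B : Matrix I (Fin m) R)
    (hB : ∀ j : Fin m → I, Function.Injective j → k ∣ (B.submatrix j id).det) :
    k ∣ (G * B).det := by
  have h1 : (G * B).det =
      Matrix.detRowAlternating (R := R) (n := Fin m) (fun a : Fin m => ∑ x : I, G a x • B x) := by
    unfold Matrix.det
    congr 1
    funext a b
    simp [Matrix.mul_apply, Finset.sum_apply, smul_eq_mul]
  rw [h1]
  rw [← AlternatingMap.coe_multilinearMap]
  rw [show (fun a : Fin m => ∑ x : I, G a x • B x)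
      = (fun a : Fin m => ∑ x : I, (fun (i : Fin m) (y : I) => G i y • B y) a x) from rfl]
  rw [(Matrix.detRowAlternating (R := R) (n := Fin m)).toMultilinearMap.map_sum
      (g := fun (i : Fin m) (y : I) => G i y • B y)]
  refine Finset.dvd_sum fun r _ => ?_
  have h3 : (Matrix.detRowAlternating (R := R) (n := Fin m)).toMultilinearMap
      (fun a => (fun (i : Fin m) (y : I) => G i y • B y) a (r a))
      = (∏ a, G a (r a)) • (Matrix.detRowAlternating (R := R) (n := Fin m))
        (fun a => B (r a)) := by
    exact MultilinearMap.map_smul_univ _ (fun a => G a (r a)) (fun a => B (r a))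
  rw [h3]
  by_cases hr : Function.Injective r
  · have := hB r hr
    have h4 : (Matrix.detRowAlternating (R := R) (n := Fin m)) (fun a => B (r a))
        = (B.submatrix r id).det := rfl
    rw [h4, smul_eq_mul]
    exact Dvd.dvd.mul_left this _
  · have h5 : (Matrix.detRowAlternating (R := R) (n := Fin m)) (fun a => B (r a)) = 0 := by
      obtain ⟨a, b, hab, hne⟩ : ∃ a b, r a = r b ∧ a ≠ b := by
        simp only [Function.Injective, not_forall] at hr
        obtain ⟨a, b, h1, h2⟩ := hr
        exact ⟨a, b, h1, h2⟩
      exact Matrix.det_zero_of_row_eq hne (show B (r a) = B (r b) by rw [hab])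
    rw [h5, smul_zero]
    exact dvd_zero k

/-- double counting -/
lemma aux_swap_sum (C : Clutter n) (hC : C.Uniform d) (u : Finset (Fin n) → ℕ) :
    ∑ i : Fin n, ∑ e ∈ C.edges, u e * (if i ∈ e then 1 else 0)
      = d * ∑ e ∈ C.edges, u e := by
  rw [Finset.sum_comm, Finset.mul_sum]
  refine Finset.sum_congr rfl fun e he => ?_
  have : ∑ i : Fin n, u e * (if i ∈ e then 1 else 0) = ∑ i : Fin n, (if i ∈ e then u e else 0) := by
    refine Finset.sum_congr rfl fun i _ => ?_
    split <;> simp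
  rw [this, Finset.sum_ite_mem, Finset.univ_inter, Finset.sum_const, hC e he,
    smul_eq_mul, Nat.mul_comm]

/-- The key combinatorial consequence of uniformity and MFMC: if a multiple of an
integral vector is a nonnegative integral combination of the columns of the incidence
matrix, then the vector itself is such a combination. -/
lemma aux_lemA (C : Clutter n) (hC : C.Uniform d) (h : C.HasMFMC)
    (z : Fin n → ℕ) (m : ℕ) (hm : 0 < m) (c : Finset (Fin n) → ℕ)
    (hz : ∀ i, m * z i = ∑ e ∈ C.edges, c e * (if i ∈ e then 1 else 0)) :
    ∃ y : Finset (Fin n) → ℕ, ∀ i, z i = ∑ e ∈ C.edges, y e * (if i ∈ e then 1 else 0) := by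
  obtain ⟨x, y, hx, hy0, hyle, heq⟩ := h z
  set T := ∑ e ∈ C.edges, y e with hT
  set S := ∑ i : Fin n, z i with hS
  set Cs := ∑ e ∈ C.edges, c e with hCs
  have hfilt : ∀ i : Fin n, ∑ e ∈ C.edges.filter (fun e => i ∈ e), y e
      = ∑ e ∈ C.edges, y e * (if i ∈ e then 1 else 0) := by
    intro i
    rw [Finset.sum_filter]
    refine Finset.sum_congr rfl fun e _ => ?_
    split <;> simp
  have h2 : m * S = d * Cs := by
    rw [hS, Finset.mul_sum]
    calc ∑ i : Fin n, m * z i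
        = ∑ i : Fin n, ∑ e ∈ C.edges, c e * (if i ∈ e then 1 else 0) :=
          Finset.sum_congr rfl fun i _ => hz i
      _ = d * Cs := aux_swap_sum C hC c
  have h3 : d * T ≤ S := by
    have : ∑ i : Fin n, ∑ e ∈ C.edges, y e * (if i ∈ e then 1 else 0) = d * T :=
      aux_swap_sum C hC y
    rw [← this, hS]
    refine Finset.sum_le_sum fun i _ => ?_
    rw [← hfilt i]
    exact hyle i
  have h4 : Cs ≤ m * T := by
    have e1 : m * T = ∑ i : Fin n, (m * z i) * x i := by
      rw [← heq, Finset.mul_sum]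
      refine Finset.sum_congr rfl fun i _ => by ring
    have e2 : ∑ i : Fin n, (m * z i) * x i
        = ∑ e ∈ C.edges, c e * (∑ i ∈ e, x i) := by
      calc ∑ i : Fin n, (m * z i) * x i
          = ∑ i : Fin n, ∑ e ∈ C.edges, (c e * (if i ∈ e then 1 else 0)) * x i := by
            refine Finset.sum_congr rfl fun i _ => ?_
            rw [hz i, Finset.sum_mul]
        _ = ∑ e ∈ C.edges, ∑ i : Fin n, (c e * (if i ∈ e then 1 else 0)) * x i :=
            Finset.sum_comm
        _ = ∑ e ∈ C.edges, c e * (∑ i ∈ e, x i) := by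
            refine Finset.sum_congr rfl fun e _ => ?_
            rw [Finset.mul_sum]
            have : ∑ i : Fin n, (c e * (if i ∈ e then 1 else 0)) * x i
                = ∑ i : Fin n, (if i ∈ e then c e * x i else 0) := by
              refine Finset.sum_congr rfl fun i _ => by split <;> simp
            rw [this, Finset.sum_ite_mem, Finset.univ_inter]
    rw [e1, e2, hCs]
    refine Finset.sum_le_sum fun e he => ?_
    calc c e = c e * 1 := by ring
      _ ≤ c e * (∑ i ∈ e, x i) := Nat.mul_le_mul_left _ (hx e he)
  have h5 : S = d * T := by
    have hle1 : m * S ≤ m * (d * T) := by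
      calc m * S = d * Cs := h2
        _ ≤ d * (m * T) := Nat.mul_le_mul_left _ h4
        _ = m * (d * T) := by ring
    have h6 : m * (d * T) ≤ m * S := Nat.mul_le_mul_left _ h3
    exact Nat.eq_of_mul_eq_mul_left hm (le_antisymm hle1 h6)
  refine ⟨y, fun i => ?_⟩
  have hsum : ∑ i : Fin n, ∑ e ∈ C.edges, y e * (if i ∈ e then 1 else 0) = ∑ i : Fin n, z i := by
    rw [aux_swap_sum C hC y, ← hS, h5]
  have hle : ∀ i ∈ Finset.univ, ∑ e ∈ C.edges, y e * (if i ∈ e then 1 else 0) ≤ z i := by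
    intro i _
    rw [← hfilt i]
    exact hyle i
  exact ((Finset.sum_eq_sum_iff_of_le hle).mp hsum i (Finset.mem_univ i)).symm

/-- The column of the incidence matrix indexed by an edge, as an integer vector. -/
def auxCol (C : Clutter n) (e : {e // e ∈ C.edges}) : Fin n → ℤ := fun i => C.inc i e

/-- The lattice (ℤ-span) of the columns of the incidence matrix. -/
def auxL (C : Clutter n) : Submodule ℤ (Fin n → ℤ) :=
  Submodule.span ℤ (Set.range (auxCol C))

lemma auxCol_apply (C : Clutter n) (e : {e // e ∈ C.edges}) (i : Fin n) :
    auxCol C e i = if i ∈ e.1 then 1 else 0 := rfl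

/-- Saturation of the column lattice, for positive multipliers. -/
lemma aux_sat_pos (C : Clutter n) (hC : C.Uniform d) (h : C.HasMFMC)
    (z : Fin n → ℤ) (m : ℤ) (hm : 0 < m) (hz : m • z ∈ auxL C) : z ∈ auxL C := by
  classical
  obtain ⟨t, ht⟩ := (Submodule.mem_span_range_iff_exists_fun ℤ).mp hz
  set N : ℤ := ∑ e : {e // e ∈ C.edges}, |t e| with hN
  have hN0 : 0 ≤ N := Finset.sum_nonneg fun e _ => abs_nonneg _
  have hNle : ∀ e : {e // e ∈ C.edges}, |t e| ≤ N :=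
    fun e => Finset.single_le_sum (fun e _ => abs_nonneg (t e)) (Finset.mem_univ e)
  set σ : Fin n → ℤ := ∑ e : {e // e ∈ C.edges}, auxCol C e with hσ
  have hσL : σ ∈ auxL C :=
    Submodule.sum_mem _ fun e _ => Submodule.subset_span (Set.mem_range_self e)
  set z' : Fin n → ℤ := z + N • σ with hz'
  set u : {e // e ∈ C.edges} → ℤ := fun e => t e + N * m with hu
  have hu0 : ∀ e, 0 ≤ u e := by
    intro e
    have h1 : -N ≤ t e := (abs_le.mp (hNle e)).1
    have h2 : N ≤ N * m := le_mul_of_one_le_right hN0 hm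
    simp only [hu]
    linarith
  have hz'sum : m • z' = ∑ e : {e // e ∈ C.edges}, u e • auxCol C e := by
    have : m • z' = m • z + (N * m) • σ := by
      rw [hz', smul_add, smul_smul, mul_comm]
    rw [this, ← ht, hσ, Finset.smul_sum, ← Finset.sum_add_distrib]
    refine Finset.sum_congr rfl fun e _ => ?_
    rw [hu, add_smul]
  have hz'nonneg : ∀ i, 0 ≤ z' i := by
    intro i
    have hmz : 0 ≤ m * z' i := by
      have : (m • z') i = ∑ e : {e // e ∈ C.edges}, u e * auxCol C e i := by
        rw [hz'sum, Finset.sum_apply]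
        refine Finset.sum_congr rfl fun e _ => rfl
      have h0 : 0 ≤ (m • z') i := by
        rw [this]
        refine Finset.sum_nonneg fun e _ => ?_
        refine mul_nonneg (hu0 e) ?_
        rw [auxCol_apply]
        split <;> norm_num
      simpa using h0
    nlinarith [hmz, hm]
  -- move to ℕ
  set zN : Fin n → ℕ := fun i => (z' i).toNat with hzN
  set cN : Finset (Fin n) → ℕ := fun e =>
    if he : e ∈ C.edges then (u ⟨e, he⟩).toNat else 0 with hcN
  have hNat : ∀ i, m.toNat * zN i = ∑ e ∈ C.edges, cN e * (if i ∈ e then 1 else 0) := by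
    intro i
    have hcast : ((m.toNat * zN i : ℕ) : ℤ)
        = ((∑ e ∈ C.edges, cN e * (if i ∈ e then 1 else 0) : ℕ) : ℤ) := by
      push_cast
      rw [Int.toNat_of_nonneg hm.le, Int.toNat_of_nonneg (hz'nonneg i)]
      have hL : m * z' i = ∑ e : {e // e ∈ C.edges}, u e * auxCol C e i := by
        have := congrFun hz'sum i
        simpa [Finset.sum_apply] using this
      rw [hL]
      rw [← Finset.sum_coe_sort (s := C.edges)
        (f := fun e => (cN e : ℤ) * (if i ∈ e then 1 else 0))]
      refine Finset.sum_congr rfl fun e _ => ?_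
      have : (cN e.1 : ℤ) = u e := by
        rw [hcN]
        simp only [e.2, dif_pos]
        rw [Int.toNat_of_nonneg (hu0 e)]
      rw [this, auxCol_apply]
    exact_mod_cast hcast
  obtain ⟨y, hy⟩ := aux_lemA C hC h zN m.toNat (by simpa using hm) cN hNat
  have hz'mem : z' ∈ auxL C := by
    have hz'eq : z' = ∑ e : {e // e ∈ C.edges}, (y e.1 : ℤ) • auxCol C e := by
      funext i
      rw [Finset.sum_apply]
      have h1 : z' i = ((zN i : ℕ) : ℤ) := by
        rw [hzN]
        simp [Int.toNat_of_nonneg (hz'nonneg i)]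
      rw [h1, hy i]
      push_cast
      rw [← Finset.sum_coe_sort (s := C.edges)
        (f := fun e => (y e : ℤ) * (if i ∈ e then 1 else 0))]
      refine Finset.sum_congr rfl fun e _ => ?_
      simp [auxCol, Clutter.inc, smul_eq_mul, mul_ite]
    rw [hz'eq]
    exact Submodule.sum_mem _ fun e _ =>
      Submodule.smul_mem _ _ (Submodule.subset_span (Set.mem_range_self e))
  have : z = z' - N • σ := by rw [hz']; abel
  rw [this]
  exact Submodule.sub_mem _ hz'mem (Submodule.smul_mem _ _ hσL)

/-- Saturation of the column lattice. -/
lemma aux_sat (C : Clutter n) (hC : C.Uniform d) (h : C.HasMFMC)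
    (z : Fin n → ℤ) (m : ℤ) (hm : m ≠ 0) (hz : m • z ∈ auxL C) : z ∈ auxL C := by
  rcases lt_or_gt_of_ne hm with hneg | hpos
  · refine aux_sat_pos C hC h z (-m) (by linarith) ?_
    have : (-m) • z = -(m • z) := by rw [neg_smul]
    rw [this]
    exact Submodule.neg_mem _ hz
  · exact aux_sat_pos C hC h z m hpos hz

/-- The rank bridge: the ℤ-rank of the column lattice equals the ℚ-rank of the matrix. -/
lemma aux_finrank (C : Clutter n) :
    Module.finrank ℤ (auxL C) = (C.inc.map (Int.cast : ℤ → ℚ)).rank := by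
  classical
  haveI : Module.Finite ℤ (auxL C) :=
    Module.Finite.iff_fg.mpr (Submodule.fg_span (Set.finite_range (auxCol C)))
  set m0 := Module.finrank ℤ (auxL C) with hm0
  set bb : Module.Basis (Fin m0) ℤ (auxL C) := Module.finBasis ℤ (auxL C) with hbb
  -- the cast map
  set castL : (Fin n → ℤ) →ₗ[ℤ] (Fin n → ℚ) :=
    LinearMap.compLeft ((Int.castAddHom ℚ).toIntLinearMap) (Fin n) with hcastL
  have hcast_inj : Function.Injective castL := by
    intro a b hab
    funext i
    have h1 : ((a i : ℤ) : ℚ) = ((b i : ℤ) : ℚ) := congrFun hab i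
    exact_mod_cast h1
  set w : Fin m0 → (Fin n → ℚ) := fun j => castL ((bb j : Fin n → ℤ)) with hw
  have li_Z : LinearIndependent ℤ w := by
    have : w = (castL ∘ₗ (auxL C).subtype) ∘ bb := rfl
    rw [this]
    refine bb.linearIndependent.map' _ (LinearMap.ker_eq_bot.mpr ?_)
    exact hcast_inj.comp (Submodule.injective_subtype _)
  have li_Q : LinearIndependent ℚ w := (LinearIndependent.iff_fractionRing ℤ ℚ).mp li_Z
  -- the span equality
  have hcol_cast : ∀ e : {e // e ∈ C.edges},
      castL (auxCol C e) = (C.inc.map (Int.cast : ℤ → ℚ)).transpose e := by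
    intro e
    funext i
    rfl
  have hdir1 : ∀ z ∈ auxL C,
      castL z ∈ Submodule.span ℚ (Set.range (C.inc.map (Int.cast : ℤ → ℚ)).transpose) := by
    intro z hzz
    have : auxL C ≤ Submodule.comap castL
        ((Submodule.span ℚ (Set.range (C.inc.map (Int.cast : ℤ → ℚ)).transpose)).restrictScalars ℤ) := by
      rw [auxL]
      refine Submodule.span_le.mpr ?_
      rintro _ ⟨e, rfl⟩
      simp only [SetLike.mem_coe, Submodule.mem_comap, Submodule.restrictScalars_mem]
      rw [hcol_cast e]
      exact Submodule.subset_span (Set.mem_range_self e)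
    exact this hzz
  have hdir2 : ∀ v : auxL C, castL (v : Fin n → ℤ) ∈ Submodule.span ℚ (Set.range w) := by
    intro v
    have htop : (⊤ : Submodule ℤ (auxL C)) ≤ Submodule.comap (castL ∘ₗ (auxL C).subtype)
        ((Submodule.span ℚ (Set.range w)).restrictScalars ℤ) := by
      rw [← bb.span_eq]
      refine Submodule.span_le.mpr ?_
      rintro _ ⟨j, rfl⟩
      simp only [SetLike.mem_coe, Submodule.mem_comap, Submodule.restrictScalars_mem,
        LinearMap.coe_comp, Function.comp_apply, Submodule.coe_subtype]
      exact Submodule.subset_span (Set.mem_range_self j)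
    exact htop (Submodule.mem_top)
  have hspan_eq : Submodule.span ℚ (Set.range w)
      = Submodule.span ℚ (Set.range (C.inc.map (Int.cast : ℤ → ℚ)).transpose) := by
    apply le_antisymm
    · refine Submodule.span_le.mpr ?_
      rintro _ ⟨j, rfl⟩
      exact hdir1 _ (bb j).2
    · refine Submodule.span_le.mpr ?_
      rintro _ ⟨e, rfl⟩
      rw [← hcol_cast e]
      exact hdir2 ⟨auxCol C e, Submodule.subset_span (Set.mem_range_self e)⟩
  rw [Matrix.rank_eq_finrank_span_cols]
  change m0 = Module.finrank ℚ (Submodule.span ℚ (Set.range (C.inc.map (Int.cast : ℤ → ℚ)).transpose))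
  rw [← hspan_eq, finrank_span_eq_card li_Q,
    Fintype.card_fin]

end Stmt6Aux

/-- If `C` is a uniform clutter with the max-flow min-cut property and
its incidence matrix `A` has rank `r`, then `Δ_r(A) = 1` (equivalently, `A` diagonalizes
over `ℤ` to an identity matrix). -/
theorem stmt6 {n d : ℕ} (C : Clutter n) (hC : C.Uniform d) (h : C.HasMFMC) :
    DeltaOne C.inc ((C.inc.map (Int.cast : ℤ → ℚ)).rank) := by
  classical
  intro k hk
  set r := (C.inc.map (Int.cast : ℤ → ℚ)).rank with hrdef
  -- upgrade hk to all (possibly zero) minors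
  have hk' : ∀ (f : Fin r → Fin n) (g : Fin r → {e // e ∈ C.edges}),
      Function.Injective f → Function.Injective g → k ∣ (C.inc.submatrix f g).det := by
    intro f g hf hg
    by_cases h0 : (C.inc.submatrix f g).det = 0
    · rw [h0]; exact dvd_zero k
    · exact hk f g hf hg h0
  -- module-theoretic setup
  haveI : Module.Finite ℤ (auxL C) :=
    Module.Finite.iff_fg.mpr (Submodule.fg_span (Set.finite_range (auxCol C)))
  have hsat : ∀ (z : Fin n → ℤ) (c : ℤ), c ≠ 0 → c • z ∈ auxL C → z ∈ auxL C :=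
    fun z c hc hcz => aux_sat C hC h z c hc hcz
  haveI : NoZeroSMulDivisors ℤ ((Fin n → ℤ) ⧸ auxL C) := by
    constructor
    intro c x hcx
    by_cases hc : c = 0
    · exact Or.inl hc
    · refine Or.inr ?_
      obtain ⟨z, rfl⟩ := Submodule.Quotient.mk_surjective (auxL C) x
      have : ((Submodule.Quotient.mk (c • z)) : (Fin n → ℤ) ⧸ auxL C) = 0 := by
        rw [Submodule.Quotient.mk_smul]
        exact hcx
      rw [Submodule.Quotient.mk_eq_zero] at this ⊢
      exact hsat z c hc this
  -- retraction onto the lattice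
  obtain ⟨s, hs⟩ := Module.projective_lifting_property (auxL C).mkQ
    (LinearMap.id : ((Fin n → ℤ) ⧸ auxL C) →ₗ[ℤ] ((Fin n → ℤ) ⧸ auxL C))
    (Submodule.mkQ_surjective (auxL C))
  set ρ : (Fin n → ℤ) →ₗ[ℤ] (Fin n → ℤ) := LinearMap.id - s ∘ₗ (auxL C).mkQ with hρ
  have hρmem : ∀ x, ρ x ∈ auxL C := by
    intro x
    rw [← Submodule.Quotient.mk_eq_zero (auxL C)]
    have : (auxL C).mkQ (ρ x) = (auxL C).mkQ x - ((auxL C).mkQ ∘ₗ s) ((auxL C).mkQ x) := by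
      simp [hρ]
    rw [show ((Submodule.Quotient.mk (ρ x)) : (Fin n → ℤ) ⧸ auxL C) = (auxL C).mkQ (ρ x) from rfl,
      this, hs]
    simp
  have hρid : ∀ x ∈ auxL C, ρ x = x := by
    intro x hx
    have : (auxL C).mkQ x = 0 := by
      rw [Submodule.mkQ_apply, Submodule.Quotient.mk_eq_zero]
      exact hx
    simp [hρ, this]
  -- a basis of the lattice of size r
  set b : Module.Basis (Fin r) ℤ (auxL C) := Module.finBasisOfFinrankEq ℤ (auxL C) (aux_finrank C)
    with hb
  -- matrices
  set ρL : (Fin n → ℤ) →ₗ[ℤ] (auxL C) := LinearMap.codRestrict (auxL C) ρ hρmem with hρL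
  set B' : Matrix (Fin n) (Fin r) ℤ := Matrix.of (fun i j => ((b j : Fin n → ℤ)) i) with hB'
  set G : Matrix (Fin r) (Fin n) ℤ :=
    Matrix.of (fun j i => b.repr (ρL (Pi.single i 1)) j) with hG
  -- G * B' = 1
  have happly : ∀ (j : Fin r) (v : Fin n → ℤ), b.repr (ρL v) j
      = ∑ i : Fin n, v i * b.repr (ρL (Pi.single i 1)) j := by
    intro j v
    have hv : v = ∑ i : Fin n, v i • (Pi.single i (1:ℤ) : Fin n → ℤ) := by
      funext a
      simp [Finset.sum_apply, Pi.single_apply, mul_ite]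
    conv_lhs => rw [hv]
    rw [map_sum, map_sum, Finsupp.finset_sum_apply]
    refine Finset.sum_congr rfl fun i _ => ?_
    rw [map_smul, map_smul, Finsupp.smul_apply, smul_eq_mul]
  have hGB : G * B' = 1 := by
    ext j j'
    rw [Matrix.mul_apply]
    have hsum : ∑ i : Fin n, G j i * B' i j' = b.repr (ρL ((b j' : Fin n → ℤ))) j := by
      rw [happly j ((b j' : Fin n → ℤ))]
      refine Finset.sum_congr rfl fun i _ => ?_
      simp only [hG, hB', Matrix.of_apply]
      ring
    rw [hsum]
    have hfix : ρL ((b j' : Fin n → ℤ)) = b j' := by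
      apply Subtype.ext
      exact hρid _ (b j').2
    rw [hfix, Module.Basis.repr_self]
    rw [Matrix.one_apply, Finsupp.single_apply]
    by_cases hjj : j = j'
    · subst hjj; simp
    · rw [if_neg hjj, if_neg (Ne.symm hjj)]
  -- minors of B' are divisible by k
  have hB'minors : ∀ jf : Fin r → Fin n, Function.Injective jf →
      k ∣ (B'.submatrix jf id).det := by
    intro jf hjf
    -- coefficients expressing the basis vectors in terms of the columns
    have hDex : ∀ j : Fin r, ∃ t : {e // e ∈ C.edges} → ℤ,
        ∑ e, t e • auxCol C e = ((b j : Fin n → ℤ)) :=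
      fun j => (Submodule.mem_span_range_iff_exists_fun ℤ).mp (b j).2
    choose D hD using hDex
    have hfac : B'.submatrix jf id
        = (C.inc.submatrix jf id) * (Matrix.of (fun e j => D j e)) := by
      ext a c
      rw [Matrix.mul_apply]
      have := congrFun (hD c) (jf a)
      rw [Finset.sum_apply] at this
      simp only [Matrix.submatrix_apply, id_eq, hB', Matrix.of_apply]
      rw [← this]
      refine Finset.sum_congr rfl fun e _ => ?_
      simp only [Matrix.of_apply, Pi.smul_apply, smul_eq_mul, auxCol]
      ring
    rw [hfac, ← Matrix.det_transpose, Matrix.transpose_mul]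
    refine aux_det_mul_dvd_of_dvd_minors k _ _ ?_
    intro g hg
    have heqm : ((C.inc.submatrix jf id).transpose).submatrix g id
        = (C.inc.submatrix jf g).transpose := by
      ext a c
      simp [Matrix.submatrix_apply, Matrix.transpose_apply]
    rw [heqm, Matrix.det_transpose]
    exact hk' jf g hjf hg
  -- conclude
  have hfinal : k ∣ (G * B').det := aux_det_mul_dvd_of_dvd_minors k G B' hB'minors
  rw [hGB, Matrix.det_one] at hfinal
  exact isUnit_of_dvd_one hfinal
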